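/- Let $\mathcal{D}$ be a triangulated K3 category with a stability condition $\sigma$, and let $f$ be an exact autoequivalence of $\mathcal{D}$ that fixes (up to isomorphism) every $\sigma$-stable spherical object. Suppose every rigid object $E$ admits a filtration $E_1 \to E_2 \to \cdots \to E_n = E$ with cones $A_i^{\oplus m_i}$ where each $A_i$ is a $\sigma$-stable spherical object and $\operatorname{Hom}(E_i, A_{i+1}) = 0$. Then $f(E) \cong E$ for every rigid object $E$. -/

import Mathlib

open CategoryTheory Limits Pretriangulated Module

/-- (The slicing of) a Bridgeland stability condition: full subcategories `P φ` of
semistable objects of phase `φ`, compatible with the shift and with no morphisms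
from higher to lower phase. -/
structure Slicing (C : Type*) [Category C] [Preadditive C]
    [HasZeroObject C] [HasShift C ℤ] [∀ n : ℤ, (CategoryTheory.shiftFunctor C n).Additive]
    [Pretriangulated C] where
  /-- the semistable objects of phase `φ` -/
  P : ℝ → Set C
  /-- closure under isomorphisms -/
  iso_mem : ∀ (φ : ℝ) (A B : C), (A ≅ B) → A ∈ P φ → B ∈ P φ
  /-- compatibility with the shift: `P (φ)[n] = P (φ + n)` -/
  shift_mem : ∀ (φ : ℝ) (n : ℤ) (A : C), A ∈ P φ → (A⟦n⟧ : C) ∈ P (φ + n)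
  /-- no morphisms from higher phase to lower phase -/
  hom_vanish : ∀ (φ₁ φ₂ : ℝ), φ₁ > φ₂ → ∀ A ∈ P φ₁, ∀ B ∈ P φ₂, ∀ f : A ⟶ B, f = 0

variable {C : Type*} [Category C] [Preadditive C]
  [HasZeroObject C] [HasShift C ℤ] [∀ n : ℤ, (CategoryTheory.shiftFunctor C n).Additive]
  [Pretriangulated C]

/-- `A` is `σ`-stable of phase `φ`: it is a nonzero semistable object of phase `φ`
which is a simple object of `P(φ)`, i.e. every mono of `P(φ)` into `A` is either
zero or an isomorphism. -/
def IsStableOfPhase (σ : Slicing C) (A : C) (φ : ℝ) : Prop :=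
  A ∈ σ.P φ ∧ ¬ IsZero A ∧
    ∀ B : C, B ∈ σ.P φ → ∀ g : B ⟶ A,
      (∀ W : C, W ∈ σ.P φ → ∀ h : W ⟶ B, h ≫ g = 0 → h = 0) →
      g = 0 ∨ IsIso g

variable (k : Type*) [Field k] [Linear k C]

/-- A spherical object: `Hom(E, E[i])` is one-dimensional for `i = 0, 2` and zero otherwise. -/
def IsSpherical (E : C) : Prop :=
  finrank k (E ⟶ E⟦(0 : ℤ)⟧) = 1 ∧ finrank k (E ⟶ E⟦(2 : ℤ)⟧) = 1 ∧
    ∀ i : ℤ, i ≠ 0 → i ≠ 2 → ∀ φ : E ⟶ E⟦i⟧, φ = 0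

/-- A rigid object: `Hom(E, E[1]) = 0`. -/
def IsRigid (E : C) : Prop := ∀ φ : E ⟶ E⟦(1 : ℤ)⟧, φ = 0

section AuxOrbit
open Module Polynomial

namespace StmtAux

/-- In a finite-dimensional `ℂ`-algebra, the set of (transported) units is open. -/
lemma isOpen_isUnit_transport {R : Type*} [Ring R] [Algebra ℂ R] [FiniteDimensional ℂ R]
    {n : ℕ} (κ : R ≃ₗ[ℂ] (Fin n → ℂ)) :
    IsOpen {x : Fin n → ℂ | IsUnit (κ.symm x)} := by
  classical
  let b := Module.finBasis ℂ R
  let matf : R →ₗ[ℂ] Matrix (Fin (finrank ℂ R)) (Fin (finrank ℂ R)) ℂ :=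
    (LinearMap.toMatrixAlgEquiv b).toLinearMap ∘ₗ (Algebra.lmul ℂ R).toLinearMap
  have hcrit : ∀ a : R, IsUnit a ↔ (matf a).det ≠ 0 := by
    intro a
    rw [← isUnit_iff_ne_zero, ← Matrix.isUnit_iff_isUnit_det]
    constructor
    · intro h
      exact ((Algebra.lmul_isUnit_iff (R := ℂ)).mpr h).map (LinearMap.toMatrixAlgEquiv b)
    · intro h
      apply (Algebra.lmul_isUnit_iff (R := ℂ)).mp
      have h2 : IsUnit ((LinearMap.toMatrixAlgEquiv b).symm (matf a)) :=
        h.map (LinearMap.toMatrixAlgEquiv b).symm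
      rwa [show matf a = LinearMap.toMatrixAlgEquiv b (Algebra.lmul ℂ R a) from rfl,
        AlgEquiv.symm_apply_apply] at h2
  have hcont : Continuous fun x : Fin n → ℂ => (matf (κ.symm x)).det := by
    have h1 : Continuous fun x : Fin n → ℂ => matf (κ.symm x) :=
      (matf ∘ₗ (κ.symm : (Fin n → ℂ) →ₗ[ℂ] R)).continuous_of_finiteDimensional
    exact h1.matrix_det
  have : {x : Fin n → ℂ | IsUnit (κ.symm x)}
      = (fun x : Fin n → ℂ => (matf (κ.symm x)).det) ⁻¹' ({0}ᶜ) := by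
    ext x
    simp only [Set.mem_setOf_eq, Set.mem_preimage, Set.mem_compl_iff, Set.mem_singleton_iff]
    exact hcrit _
  rw [this]
  exact isOpen_compl_singleton.preimage hcont

variable {R S M : Type*} [Ring R] [Ring S] [Algebra ℂ R] [Algebra ℂ S]
  [AddCommGroup M] [Module ℂ M]
  [FiniteDimensional ℂ R] [FiniteDimensional ℂ S] [FiniteDimensional ℂ M]

/-- Local openness of the orbit of `v` under units acting on both sides, provided the
infinitesimal action at `v` is surjective. -/
lemma orbit_mem_nhds
    (l : R →ₗ[ℂ] M →ₗ[ℂ] M) (r : S →ₗ[ℂ] M →ₗ[ℂ] M)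
    (hl_one : ∀ m : M, l 1 m = m) (hr_one : ∀ m : M, r 1 m = m)
    (κ : M ≃ₗ[ℂ] (Fin (finrank ℂ M) → ℂ)) (v : M)
    (hsurj : ∀ m : M, ∃ a s, m = l a v + r s v) :
    κ '' {u : M | ∃ a s, IsUnit a ∧ IsUnit s ∧ u = l a (r s v)} ∈ nhds (κ v) := by
  classical
  set nR := finrank ℂ R
  set nS := finrank ℂ S
  let κR : R ≃ₗ[ℂ] (Fin nR → ℂ) := (Module.finBasis ℂ R).equivFun
  let κS : S ≃ₗ[ℂ] (Fin nS → ℂ) := (Module.finBasis ℂ S).equivFun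
  let B : (Fin nR → ℂ) →ₗ[ℂ] (Fin nS → ℂ) →ₗ[ℂ] (Fin (finrank ℂ M) → ℂ) :=
    LinearMap.mk₂ ℂ (fun x y => κ (l (κR.symm x) (r (κS.symm y) v)))
      (fun x₁ x₂ y => by simp [map_add, LinearMap.add_apply])
      (fun c x y => by simp [map_smul, LinearMap.smul_apply])
      (fun x y₁ y₂ => by simp [map_add, LinearMap.add_apply])
      (fun c x y => by simp [map_smul, LinearMap.smul_apply])
  let B1 : (Fin nR → ℂ) →ₗ[ℂ] (Fin nS → ℂ) →L[ℂ] (Fin (finrank ℂ M) → ℂ) :=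
    { toFun := fun x => LinearMap.toContinuousLinearMap (B x)
      map_add' := fun x₁ x₂ => by ext y; simp
      map_smul' := fun c x => by ext y; simp }
  let Bc := LinearMap.toContinuousLinearMap B1
  have hbb : IsBoundedBilinearMap ℂ (fun p : (Fin nR → ℂ) × (Fin nS → ℂ) => Bc p.1 p.2) :=
    Bc.isBoundedBilinearMap
  set p₀ : (Fin nR → ℂ) × (Fin nS → ℂ) := (κR 1, κS 1) with hp₀
  have hval : ∀ x y, Bc x y = κ (l (κR.symm x) (r (κS.symm y) v)) := fun x y => rfl
  have hF0 : Bc p₀.1 p₀.2 = κ v := by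
    rw [hval]
    simp [hp₀, hl_one, hr_one]
  have hds : HasStrictFDerivAt (fun p : (Fin nR → ℂ) × (Fin nS → ℂ) => Bc p.1 p.2)
      (hbb.deriv p₀) p₀ := hbb.hasStrictFDerivAt p₀
  have hrange : (hbb.deriv p₀).range = ⊤ := by
    rw [LinearMap.range_eq_top]
    intro m
    obtain ⟨a, s, hm⟩ := hsurj (κ.symm m)
    refine ⟨(κR a, κS s), ?_⟩
    rw [ContinuousLinearMap.coe_coe, hbb.deriv_apply]
    show Bc (κR 1) (κS s) + Bc (κR a) (κS 1) = m
    rw [hval, hval]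
    simp only [LinearEquiv.symm_apply_apply, hl_one, hr_one]
    rw [← map_add]
    conv_rhs => rw [← LinearEquiv.apply_symm_apply κ m]
    congr 1
    rw [hm, add_comm]
  have hmap := hds.map_nhds_eq_of_surj hrange
  have hU : IsOpen {p : (Fin nR → ℂ) × (Fin nS → ℂ) |
      IsUnit (κR.symm p.1) ∧ IsUnit (κS.symm p.2)} := by
    have h1 := (isOpen_isUnit_transport κR).preimage
      (continuous_fst : Continuous (Prod.fst : (Fin nR → ℂ) × (Fin nS → ℂ) → _))
    have h2 := (isOpen_isUnit_transport κS).preimage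
      (continuous_snd : Continuous (Prod.snd : (Fin nR → ℂ) × (Fin nS → ℂ) → _))
    exact h1.inter h2
  have hUmem : {p : (Fin nR → ℂ) × (Fin nS → ℂ) |
      IsUnit (κR.symm p.1) ∧ IsUnit (κS.symm p.2)} ∈ nhds p₀ := by
    apply hU.mem_nhds
    constructor <;> simp [hp₀]
  have himg := Filter.image_mem_map (m := fun p : (Fin nR → ℂ) × (Fin nS → ℂ) => Bc p.1 p.2) hUmem
  rw [hmap, hF0] at himg
  apply Filter.mem_of_superset himg
  rintro _ ⟨p, hp, rfl⟩
  exact ⟨l (κR.symm p.1) (r (κS.symm p.2) v), ⟨κR.symm p.1, κS.symm p.2, hp.1, hp.2, rfl⟩,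
    (hval _ _).symm⟩

end StmtAux

namespace StmtAux2

open StmtAux

variable {R S M : Type*} [Ring R] [Ring S] [Algebra ℂ R] [Algebra ℂ S]
  [AddCommGroup M] [Module ℂ M]
  [FiniteDimensional ℂ R] [FiniteDimensional ℂ S] [FiniteDimensional ℂ M]

/-- Two elements of a bimodule whose "infinitesimal orbit maps" are both surjective lie
in the same two-sided orbit of units. -/
lemma orbit_lemma
    (l : R →ₗ[ℂ] M →ₗ[ℂ] M) (r : S →ₗ[ℂ] M →ₗ[ℂ] M)
    (hl_one : ∀ m : M, l 1 m = m) (hr_one : ∀ m : M, r 1 m = m)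
    (hl_mul : ∀ a b (m : M), l (a * b) m = l b (l a m))
    (hr_mul : ∀ a b (m : M), r (a * b) m = r a (r b m))
    (hlr : ∀ a s (m : M), l a (r s m) = r s (l a m))
    (w w' : M)
    (hw : ∀ m : M, ∃ a s, m = l a w + r s w)
    (hw' : ∀ m : M, ∃ a s, m = l a w' + r s w') :
    ∃ a s, IsUnit a ∧ IsUnit s ∧ w' = l a (r s w) := by
  classical
  -- the infinitesimal action at `v`
  set Φ : M → (R × S →ₗ[ℂ] M) := fun v => ((l.flip v).comp (LinearMap.fst ℂ R S)) +
    ((r.flip v).comp (LinearMap.snd ℂ R S)) with hΦ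
  have hΦ_apply : ∀ v (p : R × S), Φ v p = l p.1 v + r p.2 v := fun v p => rfl
  -- the line from `w` to `w'`
  set vt : ℂ → M := fun t => w + t • (w' - w) with hvt
  have hvt0 : vt 0 = w := by simp [hvt]
  have hvt1 : vt 1 = w' := by simp [hvt]
  have hline : ∀ t (p : R × S), Φ (vt t) p = Φ w p + t • Φ (w' - w) p := by
    intro t p
    simp only [hΦ_apply, hvt, map_add, map_smul, smul_add]
    abel
  -- a linear section of `Φ w`
  have hsurjw : Function.Surjective (Φ w) := by
    intro m
    obtain ⟨a, s, h⟩ := hw m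
    exact ⟨(a, s), h.symm⟩
  obtain ⟨ι, hι⟩ := (Φ w).exists_rightInverse_of_surjective (LinearMap.range_eq_top.mpr hsurjw)
  have hι' : ∀ m : M, Φ w (ι m) = m := fun m => LinearMap.ext_iff.mp hι m
  set A₁ : M →ₗ[ℂ] M := (Φ (w' - w)).comp ι with hA₁
  have hSt : ∀ t : ℂ, (Φ (vt t)).comp ι = LinearMap.id + t • A₁ := by
    intro t
    apply LinearMap.ext
    intro m
    simp only [LinearMap.comp_apply, LinearMap.add_apply, LinearMap.id_apply,
      LinearMap.smul_apply, hA₁]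
    rw [hline t (ι m), hι']
  -- the determinant polynomial
  set bM := Module.finBasis ℂ M with hbM
  set eM := LinearMap.toMatrixAlgEquiv bM with heM
  set NA := eM A₁ with hNA
  set P : Polynomial ℂ := (1 + (Polynomial.X : Polynomial ℂ) • NA.map Polynomial.C).det with hP
  have hPt : ∀ t : ℂ, P.eval t = ((1 : Matrix _ _ ℂ) + t • NA).det := by
    intro t
    have h1 : (Polynomial.evalRingHom t).mapMatrix (1 + (Polynomial.X : Polynomial ℂ) • NA.map Polynomial.C)
        = (1 : Matrix _ _ ℂ) + t • NA := by
      ext i j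
      simp only [RingHom.mapMatrix_apply, Matrix.map_apply, Matrix.add_apply, Matrix.smul_apply,
        Matrix.one_apply, smul_eq_mul, Polynomial.coe_evalRingHom]
      by_cases hij : i = j
      · rw [if_pos hij, if_pos hij, Polynomial.eval_add, Polynomial.eval_one,
          Polynomial.eval_mul, Polynomial.eval_X, Polynomial.eval_C, mul_comm]
      · rw [if_neg hij, if_neg hij, Polynomial.eval_add, Polynomial.eval_zero,
          Polynomial.eval_mul, Polynomial.eval_X, Polynomial.eval_C, mul_comm]
    calc P.eval t = (Polynomial.evalRingHom t) P := rfl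
      _ = ((Polynomial.evalRingHom t).mapMatrix (1 + (Polynomial.X : Polynomial ℂ) • NA.map Polynomial.C)).det := by
          rw [hP, RingHom.map_det]
      _ = _ := by rw [h1]
  have hP0 : P.eval 0 = 1 := by
    rw [hPt 0]
    simp
  have hPne : P ≠ 0 := fun h => by simp [h] at hP0
  set bad : Set ℂ := {t : ℂ | P.eval t = 0} with hbad
  have hbadfin : bad.Finite := Polynomial.finite_setOf_isRoot hPne
  have h0bad : (0 : ℂ) ∉ bad := by simp [hbad, hP0]
  -- surjectivity of the infinitesimal action along the line
  have hsurj_t : ∀ t : ℂ, t ∉ bad → Function.Surjective (Φ (vt t)) := by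
    intro t ht
    have hdet : ((1 : Matrix _ _ ℂ) + t • NA).det ≠ 0 := by
      rw [← hPt t]; exact ht
    have hmunit : IsUnit ((1 : Matrix _ _ ℂ) + t • NA) :=
      (Matrix.isUnit_iff_isUnit_det _).mpr (isUnit_iff_ne_zero.mpr hdet)
    have heq : eM (LinearMap.id + t • A₁) = (1 : Matrix _ _ ℂ) + t • NA := by
      rw [map_add, map_smul, hNA]
      congr 1
      exact map_one eM
    have hunit : IsUnit (LinearMap.id + t • A₁ : M →ₗ[ℂ] M) := by
      have h2 := hmunit.map eM.symm
      rwa [← heq, AlgEquiv.symm_apply_apply] at h2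
    have hbij : Function.Bijective (LinearMap.id + t • A₁ : M →ₗ[ℂ] M) :=
      Module.End.isUnit_iff _ |>.mp hunit
    intro m
    obtain ⟨m₀, hm₀⟩ := hbij.surjective m
    refine ⟨ι m₀, ?_⟩
    have := LinearMap.ext_iff.mp (hSt t) m₀
    rw [LinearMap.comp_apply] at this
    rw [this, hm₀]
  -- the orbit
  set Ω : Set M := {u : M | ∃ a s, IsUnit a ∧ IsUnit s ∧ u = l a (r s w)} with hΩ
  have hΩw : w ∈ Ω := ⟨1, 1, isUnit_one, isUnit_one, by rw [hr_one, hl_one]⟩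
  -- transitivity facts
  have hcomp : ∀ v ∈ Ω, ∀ b t, IsUnit b → IsUnit t → l b (r t v) ∈ Ω := by
    rintro v ⟨a, s, ha, hs, rfl⟩ b t hb ht
    refine ⟨a * b, t * s, ha.mul hb, ht.mul hs, ?_⟩
    calc l b (r t (l a (r s w))) = l b (l a (r t (r s w))) := by
          rw [← hlr a t (r s w)]
      _ = l b (l a (r (t * s) w)) := by rw [← hr_mul t s w]
      _ = l (a * b) (r (t * s) w) := (hl_mul a b _).symm
  have hback : ∀ (z v : M) (b t_ : _), IsUnit b → IsUnit t_ → z = l b (r t_ v) → z ∈ Ω → v ∈ Ω := by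
    rintro z v b t_ hb ht rfl hz
    have hbu : b * (↑hb.unit⁻¹ : R) = 1 := hb.mul_val_inv
    have htu : (↑ht.unit⁻¹ : S) * t_ = 1 := ht.val_inv_mul
    have h1 : l (↑hb.unit⁻¹ : R) (r (↑ht.unit⁻¹ : S) (l b (r t_ v))) = v := by
      calc l (↑hb.unit⁻¹ : R) (r (↑ht.unit⁻¹ : S) (l b (r t_ v)))
          = l (↑hb.unit⁻¹ : R) (l b (r (↑ht.unit⁻¹ : S) (r t_ v))) := by
            rw [← hlr b (↑ht.unit⁻¹ : S) (r t_ v)]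
        _ = l (b * (↑hb.unit⁻¹ : R)) (r (↑ht.unit⁻¹ : S) (r t_ v)) := by
            rw [← hl_mul b (↑hb.unit⁻¹ : R) (r (↑ht.unit⁻¹ : S) (r t_ v))]
        _ = l (b * (↑hb.unit⁻¹ : R)) (r ((↑ht.unit⁻¹ : S) * t_) v) := by
            rw [← hr_mul (↑ht.unit⁻¹ : S) t_ v]
        _ = v := by rw [hbu, htu, hl_one, hr_one]
    have := hcomp _ hz (↑hb.unit⁻¹ : R) (↑ht.unit⁻¹ : S) (Units.isUnit _) (Units.isUnit _)
    rwa [h1] at this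
  -- topology
  set κ : M ≃ₗ[ℂ] (Fin (finrank ℂ M) → ℂ) := bM.equivFun with hκ
  set gamma : ℂ → (Fin (finrank ℂ M) → ℂ) := fun t => κ (vt t) with hgamma
  have hgc : Continuous gamma := by
    have : gamma = fun t => κ w + t • (κ (w' - w)) := by
      funext t
      simp [hgamma, hvt, map_add, map_smul]
    rw [this]
    exact continuous_const.add (continuous_id.smul continuous_const)
  set KΩ : Set (Fin (finrank ℂ M) → ℂ) := κ '' Ω with hKΩ
  set Useta : Set ℂ := interior (gamma ⁻¹' KΩ) with hUseta
  set Vseta : Set ℂ := interior (gamma ⁻¹' KΩᶜ) with hVseta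
  set good : Set ℂ := badᶜ ∪ {1} with hgood
  have hUsub : Useta ⊆ gamma ⁻¹' KΩ := by rw [hUseta]; exact interior_subset
  have hVsub : Vseta ⊆ gamma ⁻¹' KΩᶜ := by rw [hVseta]; exact interior_subset
  by_contra hne
  have hw'Ω : w' ∉ Ω := by
    intro h
    obtain ⟨a, s, ha, hs, h'⟩ := h
    exact hne ⟨a, s, ha, hs, h'⟩
  -- every good point lies in Useta ∪ Vseta
  have hsub : good ⊆ Useta ∪ Vseta := by
    intro t ht
    have hsurjt : Function.Surjective (Φ (vt t)) := by
      rcases ht with ht | ht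
      · exact hsurj_t t ht
      · simp only [Set.mem_singleton_iff] at ht
        subst ht
        rw [hvt1]
        intro m
        obtain ⟨a, s, h⟩ := hw' m
        exact ⟨(a, s), h.symm⟩
    have hsv : ∀ m : M, ∃ a s, m = l a (vt t) + r s (vt t) := by
      intro m
      obtain ⟨p, hp⟩ := hsurjt m
      exact ⟨p.1, p.2, hp.symm⟩
    have hnh := orbit_mem_nhds l r hl_one hr_one κ (vt t) hsv
    by_cases hvtΩ : vt t ∈ Ω
    · left
      have hsup : κ '' {u : M | ∃ a s, IsUnit a ∧ IsUnit s ∧ u = l a (r s (vt t))} ⊆ KΩ := by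
        rintro _ ⟨z, ⟨a, s, ha, hs, rfl⟩, rfl⟩
        exact ⟨_, hcomp _ hvtΩ a s ha hs, rfl⟩
      have hmem : KΩ ∈ nhds (gamma t) := Filter.mem_of_superset hnh hsup
      show t ∈ Useta
      rw [hUseta]
      exact mem_interior_iff_mem_nhds.mpr (hgc.continuousAt.preimage_mem_nhds hmem)
    · right
      have hsup : κ '' {u : M | ∃ a s, IsUnit a ∧ IsUnit s ∧ u = l a (r s (vt t))} ⊆ KΩᶜ := by
        rintro _ ⟨z, ⟨a, s, ha, hs, rfl⟩, rfl⟩ hmem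
        obtain ⟨z', hz', hzz⟩ := hmem
        have : z' = l a (r s (vt t)) := κ.injective hzz
        subst this
        exact hvtΩ (hback _ _ a s ha hs rfl hz')
      have hmem : KΩᶜ ∈ nhds (gamma t) := Filter.mem_of_superset hnh hsup
      show t ∈ Vseta
      rw [hVseta]
      exact mem_interior_iff_mem_nhds.mpr (hgc.continuousAt.preimage_mem_nhds hmem)
  -- preconnectedness of `good`
  have hpre : IsPreconnected good := by
    have hpath : IsPathConnected badᶜ := by
      refine hbadfin.countable.isPathConnected_compl_of_one_lt_rank ?_
      rw [Complex.rank_real_complex]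
      norm_num
    have hconn : IsPreconnected badᶜ := hpath.isConnected.isPreconnected
    refine hconn.subset_closure Set.subset_union_left ?_
    intro t _
    rw [mem_closure_iff_nhds]
    intro U hU
    have hUinf : U.Infinite := infinite_of_mem_nhds t hU
    obtain ⟨x, hxU, hxbad⟩ := (hUinf.diff hbadfin).nonempty
    exact ⟨x, hxU, hxbad⟩
  -- endpoints
  have h0good : (0 : ℂ) ∈ good := Or.inl h0bad
  have h1good : (1 : ℂ) ∈ good := Or.inr rfl
  have h0mem : (0 : ℂ) ∈ Useta ∪ Vseta := hsub h0good
  have h1mem : (1 : ℂ) ∈ Useta ∪ Vseta := hsub h1good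
  have hg0 : gamma 0 ∈ KΩ := ⟨w, hΩw, by show κ w = κ (vt 0); rw [hvt0]⟩
  have hg1 : gamma 1 ∉ KΩ := by
    rintro ⟨z, hz, hzz⟩
    have hz1 : z = vt 1 := κ.injective hzz
    rw [hvt1] at hz1
    subst hz1
    exact hw'Ω hz
  have h0U : (0 : ℂ) ∈ Useta := by
    rcases h0mem with h | h
    · exact h
    · exact absurd hg0 (hVsub h)
  have h1V : (1 : ℂ) ∈ Vseta := by
    rcases h1mem with h | h
    · exact absurd (hUsub h) hg1
    · exact h
  have hUopen : IsOpen Useta := by rw [hUseta]; exact isOpen_interior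
  have hVopen : IsOpen Vseta := by rw [hVseta]; exact isOpen_interior
  have := hpre Useta Vseta hUopen hVopen hsub ⟨0, h0good, h0U⟩ ⟨1, h1good, h1V⟩
  obtain ⟨x, _, hxU, hxV⟩ := this
  exact (hVsub hxV) (hUsub hxU)

end StmtAux2

end AuxOrbit

section AuxCat

namespace StmtCatAux

variable {C : Type*} [Category C] [Preadditive C]
  [HasZeroObject C] [HasShift C ℤ] [∀ n : ℤ, (CategoryTheory.shiftFunctor C n).Additive]
  [Pretriangulated C]

lemma zero_of_conj {P P' Q Q' : C} (eP : P' ≅ P) (eQ : Q ≅ Q')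
    (g : P ⟶ Q) (h : eP.hom ≫ g ≫ eQ.hom = 0) : g = 0 := by
  have h2 : eP.inv ≫ (eP.hom ≫ g ≫ eQ.hom) ≫ eQ.inv = g := by simp
  rw [← h2, h, zero_comp, comp_zero]

lemma zero_transport {P P' Q Q' : C} (eP : P ≅ P') (eQ : Q ≅ Q')
    (h : ∀ g : P ⟶ Q, g = 0) (g : P' ⟶ Q') : g = 0 :=
  zero_of_conj eP eQ.symm g (h _)

/-- transport of hom-vanishing along one shift: `Hom(Z, X⟦2⟧) = 0` implies
`Hom(Z⟦-1⟧, X⟦1⟧) = 0`. -/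
lemma shift_vanish {Z X : C} (h : ∀ g : Z ⟶ X⟦(2 : ℤ)⟧, g = 0)
    (g : Z⟦(-1 : ℤ)⟧ ⟶ X⟦(1 : ℤ)⟧) : g = 0 := by
  apply (shiftFunctor C (1 : ℤ)).map_injective
  rw [Functor.map_zero]
  apply zero_of_conj ((shiftFunctorCompIsoId C (-1 : ℤ) (1 : ℤ) (by norm_num)).app Z).symm
    ((shiftFunctorAdd' C (1 : ℤ) (1 : ℤ) (2 : ℤ) (by norm_num)).symm.app X)
  exact h _

/-- rigidity descends along a triangle `X ⟶ Y ⟶ Z ⟶ X⟦1⟧` when `Hom(X, Z) = 0` and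
`Hom(Z⟦-1⟧, X⟦1⟧) = 0`. -/
lemma rigid_of_triangle (T : Triangle C) (hT : T ∈ distTriang C)
    (hXZ : ∀ g : T.obj₁ ⟶ T.obj₃, g = 0)
    (hZX : ∀ g : T.obj₃⟦(-1 : ℤ)⟧ ⟶ T.obj₁⟦(1 : ℤ)⟧, g = 0)
    (hY : ∀ g : T.obj₂ ⟶ T.obj₂⟦(1 : ℤ)⟧, g = 0)
    (φ : T.obj₁ ⟶ T.obj₁⟦(1 : ℤ)⟧) : φ = 0 := by
  have h1 : φ ≫ T.mor₁⟦(1 : ℤ)⟧' = 0 := by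
    obtain ⟨β, hβ⟩ := Triangle.yoneda_exact₂ _ (inv_rot_of_distTriang _ hT)
      (φ ≫ T.mor₁⟦(1 : ℤ)⟧')
      (by
        have h0 : T.invRotate.mor₁ ≫ φ = 0 := hZX _
        exact (Category.assoc _ _ _).symm.trans
          ((congrArg (· ≫ T.mor₁⟦(1 : ℤ)⟧') h0).trans zero_comp))
    have hβ0 : β = 0 := hY β
    exact hβ.trans (by rw [hβ0]; exact comp_zero)
  obtain ⟨g, hg⟩ := Triangle.coyoneda_exact₁ _ hT φ h1
  rw [hg, hXZ g, zero_comp]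

/-- surjectivity of the infinitesimal two-sided action on `Hom(Z, X⟦1⟧)` at the connecting
map of a triangle with rigid middle term. -/
lemma sigma_surj (T : Triangle C) (hT : T ∈ distTriang C)
    (hXZ : ∀ g : T.obj₁ ⟶ T.obj₃, g = 0)
    (hY : ∀ g : T.obj₂ ⟶ T.obj₂⟦(1 : ℤ)⟧, g = 0)
    (ξ : T.obj₃ ⟶ T.obj₁⟦(1 : ℤ)⟧) :
    ∃ (η : T.obj₃ ⟶ T.obj₃) (ρ : T.obj₁⟦(1 : ℤ)⟧ ⟶ T.obj₁⟦(1 : ℤ)⟧),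
      ξ = η ≫ T.mor₃ + T.mor₃ ≫ ρ := by
  obtain ⟨ζ, hζ⟩ := Triangle.coyoneda_exact₁ _ hT (T.mor₂ ≫ ξ)
    (by rw [Category.assoc]; exact hY _)
  obtain ⟨η, hη⟩ := Triangle.yoneda_exact₂ _ hT ζ (hXZ _)
  obtain ⟨ρ, hρ⟩ := Triangle.yoneda_exact₃ _ hT (ξ - η ≫ T.mor₃)
    (by rw [Preadditive.comp_sub, ← Category.assoc, ← hη, ← hζ]; abel)
  refine ⟨η, ρ, ?_⟩
  rw [← hρ]
  abel

/-- completing a commuting square on the connecting maps to an isomorphism of cones. -/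
lemma cone_iso_of_conj {X Z Y Y' : C} (u : X ⟶ Y) (v : Y ⟶ Z) (w : Z ⟶ X⟦(1 : ℤ)⟧)
    (u' : X ⟶ Y') (v' : Y' ⟶ Z) (w' : Z ⟶ X⟦(1 : ℤ)⟧)
    (hT : Triangle.mk u v w ∈ distTriang C) (hT' : Triangle.mk u' v' w' ∈ distTriang C)
    (η : Z ⟶ Z) (ρ : X⟦(1 : ℤ)⟧ ⟶ X⟦(1 : ℤ)⟧) (hη : IsIso η) (hρ : IsIso ρ)
    (hcomm : η ≫ w' = w ≫ ρ) : Nonempty (Y ≅ Y') := by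
  have hT₂ := rot_of_distTriang _ (rot_of_distTriang _ hT)
  have hT₂' := rot_of_distTriang _ (rot_of_distTriang _ hT')
  obtain ⟨c, hc₁, hc₂⟩ := complete_distinguished_triangle_morphism
    ((Triangle.mk u v w).rotate.rotate) ((Triangle.mk u' v' w').rotate.rotate)
    hT₂ hT₂' η ρ (by dsimp [Triangle.rotate]; exact hcomm.symm)
  let φ : (Triangle.mk u v w).rotate.rotate ⟶ (Triangle.mk u' v' w').rotate.rotate :=
    { hom₁ := η
      hom₂ := ρ
      hom₃ := c
      comm₁ := by dsimp [Triangle.rotate]; exact hcomm.symm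
      comm₂ := hc₁
      comm₃ := hc₂ }
  have : IsIso φ.hom₃ := isIso₃_of_isIso₁₂ φ hT₂ hT₂' hη hρ
  have hiso : (Y⟦(1 : ℤ)⟧ : C) ≅ Y'⟦(1 : ℤ)⟧ := @asIso _ _ _ _ φ.hom₃ this
  exact ⟨(shiftFunctor C (1 : ℤ)).preimageIso hiso⟩

end StmtCatAux

end AuxCat


theorem stmt_19 {C : Type*} [Category C] [Preadditive C] [Linear ℂ C]
    [HasZeroObject C] [HasShift C ℤ] [∀ n : ℤ, (shiftFunctor C n).Additive]
    [Pretriangulated C] [HasFiniteBiproducts C] [∀ X Y : C, FiniteDimensional ℂ (X ⟶ Y)]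
    -- K3 category: Serre duality `Hom(X, Y[i]) ≅ Hom(Y, X[2 - i])^*`
    (hSerre : ∀ (X Y : C) (i : ℤ), finrank ℂ (X ⟶ Y⟦i⟧) = finrank ℂ (Y ⟶ X⟦2 - i⟧))
    (σ : Slicing C)
    (f : C ⥤ C) [f.IsEquivalence] [f.CommShift ℤ] [f.IsTriangulated]
    -- `f` fixes every `σ`-stable spherical object up to isomorphism
    (hfix : ∀ (A : C) (φ : ℝ), IsStableOfPhase σ A φ → IsSpherical ℂ A →
      Nonempty (f.obj A ≅ A))
    -- every rigid object admits a filtration with cones `Aᵢ^{⊕ mᵢ}`, `Aᵢ` stable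
    -- spherical, and `Hom(Eᵢ, Aᵢ₊₁) = 0`
    (hfilt : ∀ E : C, IsRigid E → ∃ (n : ℕ) (Eobj : Fin (n + 1) → C) (A : Fin n → C)
      (m : Fin n → ℕ)
      (u : ∀ i : Fin n, Eobj i.castSucc ⟶ Eobj i.succ)
      (v : ∀ i : Fin n, Eobj i.succ ⟶ ⨁ fun _ : Fin (m i) => A i)
      (w : ∀ i : Fin n, (⨁ fun _ : Fin (m i) => A i) ⟶ (Eobj i.castSucc)⟦(1 : ℤ)⟧),
      IsZero (Eobj 0) ∧ Nonempty (Eobj (Fin.last n) ≅ E) ∧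
        (∀ i : Fin n, Triangle.mk (u i) (v i) (w i) ∈ distTriang C) ∧
        (∀ i : Fin n, ∃ φ : ℝ, IsStableOfPhase σ (A i) φ ∧ IsSpherical ℂ (A i)) ∧
        (∀ (i : Fin n) (ψ : Eobj i.castSucc ⟶ A i), ψ = 0)) :
    ∀ E : C, IsRigid E → Nonempty (f.obj E ≅ E) := by
  classical
  intro E hE
  obtain ⟨n, Eobj, A, m, u, v, w, hzero, hlastE, htri, hstab, hvan⟩ := hfilt E hE
  obtain ⟨isoE⟩ := hlastE
  -- vanishing `Hom(Eᵢ, Zᵢ) = 0` for the biproducts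
  have hvanZ : ∀ (i : Fin n) (g : Eobj i.castSucc ⟶ ⨁ fun _ : Fin (m i) => A i), g = 0 := by
    intro i g
    apply biproduct.hom_ext
    intro j
    rw [hvan i (g ≫ biproduct.π _ j), zero_comp]
  -- Serre-dual vanishing `Hom(Zᵢ, Eᵢ⟦2⟧) = 0`
  have hserre2 : ∀ (i : Fin n)
      (g : (⨁ fun _ : Fin (m i) => A i) ⟶ (Eobj i.castSucc)⟦(2 : ℤ)⟧), g = 0 := by
    intro i
    have h0 : ∀ g : Eobj i.castSucc ⟶ ((⨁ fun _ : Fin (m i) => A i) : C)⟦(0 : ℤ)⟧, g = 0 :=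
      fun g => StmtCatAux.zero_transport (Iso.refl _) ((shiftFunctorZero C ℤ).symm.app _)
        (hvanZ i) g
    haveI hsub : Subsingleton (Eobj i.castSucc ⟶ ((⨁ fun _ : Fin (m i) => A i) : C)⟦(0 : ℤ)⟧) :=
      ⟨fun a b => by rw [h0 a, h0 b]⟩
    have hfr : finrank ℂ ((⨁ fun _ : Fin (m i) => A i) ⟶ (Eobj i.castSucc)⟦(2 : ℤ)⟧) = 0 := by
      have hs := hSerre (⨁ fun _ : Fin (m i) => A i) (Eobj i.castSucc) 2
      rw [show (2 - 2 : ℤ) = 0 by norm_num] at hs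
      rw [hs]
      exact Module.finrank_zero_iff.mpr hsub
    intro g
    haveI := Module.finrank_zero_iff.mp hfr
    exact Subsingleton.elim g 0
  -- rigidity transport along isomorphisms
  have hrigid_iso : ∀ {X Y : C} (e : X ≅ Y), (∀ g : X ⟶ X⟦(1 : ℤ)⟧, g = 0) →
      ∀ g : Y ⟶ Y⟦(1 : ℤ)⟧, g = 0 := by
    intro X Y e hX g
    have h2 := hX (e.hom ≫ g ≫ (shiftFunctor C (1 : ℤ)).map e.inv)
    have h3 : e.inv ≫ (e.hom ≫ g ≫ (shiftFunctor C (1 : ℤ)).map e.inv) ≫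
        (shiftFunctor C (1 : ℤ)).map e.hom = g := by
      simp [← Functor.map_comp]
    rw [← h3, h2, zero_comp, comp_zero]
  -- rigidity of every term of the filtration, by descending induction
  have hrigid : ∀ i : Fin (n + 1), ∀ g : Eobj i ⟶ (Eobj i)⟦(1 : ℤ)⟧, g = 0 := by
    intro i
    induction i using Fin.reverseInduction with
    | last => exact hrigid_iso isoE.symm hE
    | cast i ih =>
      exact fun g => StmtCatAux.rigid_of_triangle _ (htri i) (hvanZ i)
        (StmtCatAux.shift_vanish (hserre2 i)) ih g
  -- rigidity is preserved by `f`
  have hrigid_f : ∀ (X : C), (∀ g : X ⟶ X⟦(1 : ℤ)⟧, g = 0) →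
      ∀ g : f.obj X ⟶ (f.obj X)⟦(1 : ℤ)⟧, g = 0 := by
    intro X hX g
    obtain ⟨ψ, hψ⟩ := f.map_surjective (g ≫ (f.commShiftIso (1 : ℤ)).inv.app X)
    rw [hX ψ, f.map_zero] at hψ
    have h3 : g = (g ≫ (f.commShiftIso (1 : ℤ)).inv.app X) ≫
        (f.commShiftIso (1 : ℤ)).hom.app X := by simp
    rw [h3, ← hψ, zero_comp]
  -- `IsIso` from `IsUnit` in `End`
  have hisiso : ∀ {W : C} (a : End W), IsUnit a → IsIso (a : W ⟶ W) := by
    intro W a h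
    exact ⟨(↑h.unit⁻¹ : End W),
      ⟨(h.val_inv_mul : (↑h.unit⁻¹ : End W) * a = 1),
       (h.mul_val_inv : a * (↑h.unit⁻¹ : End W) = 1)⟩⟩
  -- the main induction
  have main : ∀ i : Fin (n + 1), Nonempty (f.obj (Eobj i) ≅ Eobj i) := by
    intro i
    induction i using Fin.induction with
    | zero =>
      have hz : IsZero (f.obj (Eobj 0)) := by
        rw [IsZero.iff_id_eq_zero] at hzero ⊢
        rw [← f.map_id, hzero, f.map_zero]
      exact ⟨hz.iso hzero⟩
    | succ i ih =>
      obtain ⟨α⟩ := ih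
      obtain ⟨φst, hst, hsp⟩ := hstab i
      obtain ⟨β⟩ := hfix (A i) φst hst hsp
      -- notation
      set Z : C := ⨁ fun _ : Fin (m i) => A i with hZdef
      set X : C := Eobj i.castSucc with hXdef
      let βZ : f.obj Z ≅ Z := f.mapBiproduct _ ≪≫ biproduct.mapIso (fun _ => β)
      let w₂ : Z ⟶ X⟦(1 : ℤ)⟧ := βZ.inv ≫ (f.map (w i) ≫ (f.commShiftIso (1 : ℤ)).hom.app X) ≫
        (shiftFunctor C (1 : ℤ)).map α.hom
      have hT₂ : Triangle.mk (α.inv ≫ f.map (u i)) (f.map (v i) ≫ βZ.hom) w₂ ∈ distTriang C := by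
        refine isomorphic_distinguished _ (f.map_distinguished _ (htri i)) _ ?_
        refine Triangle.isoMk _ _ α.symm (Iso.refl _) βZ.symm ?_ ?_ ?_
        · dsimp; show (α.inv ≫ f.map (u i)) ≫ 𝟙 _ = α.inv ≫ f.map (u i); simp
        · dsimp; show (f.map (v i) ≫ βZ.hom) ≫ βZ.inv = 𝟙 _ ≫ f.map (v i); simp
        · dsimp [w₂]
          show (βZ.inv ≫ (f.map (w i) ≫ (f.commShiftIso (1 : ℤ)).hom.app X) ≫
            (shiftFunctor C (1 : ℤ)).map α.hom) ≫ (shiftFunctor C (1 : ℤ)).map α.inv =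
            βZ.inv ≫ (f.map (w i) ≫ (f.commShiftIso (1 : ℤ)).hom.app X)
          simp [← Functor.map_comp]
      -- rigidity data
      have hYrig : ∀ g : Eobj i.succ ⟶ (Eobj i.succ)⟦(1 : ℤ)⟧, g = 0 := hrigid i.succ
      have hY'rig : ∀ g : f.obj (Eobj i.succ) ⟶ (f.obj (Eobj i.succ))⟦(1 : ℤ)⟧, g = 0 :=
        hrigid_f _ hYrig
      have hsig := StmtCatAux.sigma_surj _ (htri i) (hvanZ i) hYrig
      have hsig' := StmtCatAux.sigma_surj _ hT₂ (hvanZ i) hY'rig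
      -- set up the orbit lemma
      haveI : FiniteDimensional ℂ (End Z) := inferInstanceAs (FiniteDimensional ℂ (Z ⟶ Z))
      haveI : FiniteDimensional ℂ (End ((X⟦(1 : ℤ)⟧ : C))) :=
        inferInstanceAs (FiniteDimensional ℂ ((X⟦(1 : ℤ)⟧ : C) ⟶ (X⟦(1 : ℤ)⟧ : C)))
      let l : End Z →ₗ[ℂ] (Z ⟶ X⟦(1 : ℤ)⟧) →ₗ[ℂ] (Z ⟶ X⟦(1 : ℤ)⟧) :=
        LinearMap.mk₂ ℂ (fun a g => (a : Z ⟶ Z) ≫ g)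
          (fun a b g => Preadditive.add_comp _ _ _ _ _ _)
          (fun c a g => Linear.smul_comp _ _ _ _ _ _)
          (fun a g h => Preadditive.comp_add _ _ _ _ _ _)
          (fun c a g => Linear.comp_smul _ _ _ _ _ _)
      let r : End ((X⟦(1 : ℤ)⟧ : C)) →ₗ[ℂ] (Z ⟶ X⟦(1 : ℤ)⟧) →ₗ[ℂ] (Z ⟶ X⟦(1 : ℤ)⟧) :=
        LinearMap.mk₂ ℂ (fun s g => g ≫ (s : (X⟦(1 : ℤ)⟧ : C) ⟶ X⟦(1 : ℤ)⟧))
          (fun a b g => Preadditive.comp_add _ _ _ _ _ _)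
          (fun c a g => Linear.comp_smul _ _ _ _ _ _)
          (fun a g h => Preadditive.add_comp _ _ _ _ _ _)
          (fun c a g => Linear.smul_comp _ _ _ _ _ _)
      have hw : ∀ g : Z ⟶ X⟦(1 : ℤ)⟧, ∃ (a : End Z) (s : End ((X⟦(1 : ℤ)⟧ : C))),
          g = l a (w i) + r s (w i) := by
        intro g
        obtain ⟨η, ρ, hgr⟩ := hsig g
        exact ⟨η, ρ, hgr⟩
      have hw' : ∀ g : Z ⟶ X⟦(1 : ℤ)⟧, ∃ (a : End Z) (s : End ((X⟦(1 : ℤ)⟧ : C))),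
          g = l a w₂ + r s w₂ := by
        intro g
        obtain ⟨η, ρ, hgr⟩ := hsig' g
        exact ⟨η, ρ, hgr⟩
      obtain ⟨a, s, ha, hs, hconj⟩ := StmtAux2.orbit_lemma l r
        (fun g => Category.id_comp g) (fun g => Category.comp_id g)
        (fun a b g => by
          show ((a * b : End Z) : Z ⟶ Z) ≫ g = (b : Z ⟶ Z) ≫ ((a : Z ⟶ Z) ≫ g)
          rw [End.mul_def, Category.assoc])
        (fun a b g => by
          show g ≫ ((a * b : End ((X⟦(1 : ℤ)⟧ : C))) : _ ⟶ _) =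
            (g ≫ (b : _ ⟶ _)) ≫ (a : _ ⟶ _)
          rw [End.mul_def, Category.assoc])
        (fun a s g => by
          show (a : Z ⟶ Z) ≫ (g ≫ (s : _ ⟶ _)) = ((a : Z ⟶ Z) ≫ g) ≫ (s : _ ⟶ _)
          rw [Category.assoc])
        (w i) w₂ hw hw'
      -- `hconj : w₂ = a ≫ (w i ≫ s)`
      let ainv : End Z := ↑ha.unit⁻¹
      have hconj' : (ainv : Z ⟶ Z) ≫ w₂ = w i ≫ (s : _ ⟶ _) := by
        show (ainv : Z ⟶ Z) ≫ w₂ = _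
        rw [hconj]
        show (ainv : Z ⟶ Z) ≫ ((a : Z ⟶ Z) ≫ ((w i) ≫ (s : _ ⟶ _))) = _
        rw [← Category.assoc]
        have h1 : (ainv : Z ⟶ Z) ≫ (a : Z ⟶ Z) = 𝟙 Z := ha.mul_val_inv
        rw [h1, Category.id_comp]
      have hηIso : IsIso (ainv : Z ⟶ Z) := hisiso _ (ha.unit⁻¹).isUnit
      have hρIso : IsIso ((s : End ((X⟦(1 : ℤ)⟧ : C))) : _ ⟶ _) := hisiso _ hs
      obtain ⟨e⟩ := StmtCatAux.cone_iso_of_conj (u i) (v i) (w i)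
        (α.inv ≫ f.map (u i)) (f.map (v i) ≫ βZ.hom) w₂ (htri i) hT₂
        (ainv : Z ⟶ Z) (s : _ ⟶ _) hηIso hρIso hconj'
      exact ⟨e.symm⟩
  obtain ⟨ψ⟩ := main (Fin.last n)
  exact ⟨f.mapIso isoE.symm ≪≫ ψ ≪≫ isoE⟩
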